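/- (Bounded regret for the symmetric bandit.) Fix θ ∈ (1/2,1) and for γ ∈ (0,1) define the optimal regret at the uniform belief R(γ) = (2θ−1)/(2(1−γ)) − γ(2θ−1)² / (2(1−γ)√(1 − 4γ²θ(1−θ))). Then R(γ) converges as γ → 1⁻ and lim_{γ→1⁻} R(γ) = 1/(2(2θ−1)). In particular the regret of the symmetric two-state Bernoulli bandit at β = 0 remains bounded as the effective horizon 1/(1−γ) tends to infinity. -/

import Mathlib

/-!
Bounded regret for the symmetric two-state Bernoulli bandit: the optimal
regret at the uniform belief `β = 0`,
`R(γ) = (2θ−1)/(2(1−γ)) − γ(2θ−1)² / (2(1−γ)√(1 − 4γ²θ(1−θ)))`,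
converges as `γ → 1⁻` to `1/(2(2θ−1))`; in particular it remains bounded as
the effective horizon `1/(1−γ)` tends to infinity.
-/

/-- Optimal regret of the symmetric bandit at the uniform belief `β = 0`. -/
noncomputable def Rsym (θ γ : ℝ) : ℝ :=
  (2 * θ - 1) / (2 * (1 - γ))
    - γ * (2 * θ - 1) ^ 2 / (2 * (1 - γ) * Real.sqrt (1 - 4 * γ ^ 2 * θ * (1 - θ)))

theorem symmetric_bandit_bounded_regret
    (θ : ℝ) (hθ : θ ∈ Set.Ioo (1 / 2 : ℝ) 1) :
    Filter.Tendsto (fun γ => Rsym θ γ)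
      (nhdsWithin 1 (Set.Iio (1 : ℝ)))
      (nhds (1 / (2 * (2 * θ - 1)))) := by
  obtain ⟨hθ1, hθ2⟩ := hθ
  have ha : 0 < 2 * θ - 1 := by linarith
  set f : ℝ → ℝ := fun γ =>
    (2 * θ - 1) * (1 + γ) /
      (2 * Real.sqrt (1 - 4 * γ ^ 2 * θ * (1 - θ)) *
        (Real.sqrt (1 - 4 * γ ^ 2 * θ * (1 - θ)) + γ * (2 * θ - 1))) with hf
  have hs1 : Real.sqrt (1 - 4 * (1:ℝ) ^ 2 * θ * (1 - θ)) = 2 * θ - 1 := by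
    rw [show (1 - 4 * (1:ℝ) ^ 2 * θ * (1 - θ)) = (2 * θ - 1) ^ 2 by ring]
    exact Real.sqrt_sq ha.le
  have hlim : Filter.Tendsto f (nhdsWithin 1 (Set.Iio (1 : ℝ)))
      (nhds (1 / (2 * (2 * θ - 1)))) := by
    have hc : ContinuousAt f 1 := by
      apply ContinuousAt.div
      · fun_prop
      · fun_prop
      · rw [hs1]
        nlinarith
    have hval : f 1 = 1 / (2 * (2 * θ - 1)) := by
      rw [hf]
      simp only [hs1]
      have h2 : (2 * θ - 1) ≠ 0 := ha.ne'
      field_simp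
    have := hc.tendsto
    rw [hval] at this
    exact this.mono_left nhdsWithin_le_nhds
  apply hlim.congr'
  have h0 : ∀ᶠ γ in nhdsWithin 1 (Set.Iio (1 : ℝ)), (0:ℝ) < γ :=
    eventually_nhdsWithin_of_eventually_nhds (eventually_gt_nhds one_pos)
  have h1 : ∀ᶠ γ in nhdsWithin 1 (Set.Iio (1 : ℝ)), γ < 1 :=
    eventually_mem_nhdsWithin
  filter_upwards [h0, h1] with γ hγ0 hγ1
  have hpos : 0 < 1 - 4 * γ ^ 2 * θ * (1 - θ) := by nlinarith [sq_nonneg (2*θ-1), sq_nonneg γ]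
  set s := Real.sqrt (1 - 4 * γ ^ 2 * θ * (1 - θ)) with hs
  have hs_pos : 0 < s := Real.sqrt_pos.mpr hpos
  have hs_sq : s ^ 2 = 1 - 4 * γ ^ 2 * θ * (1 - θ) := Real.sq_sqrt hpos.le
  have hden : 0 < s + γ * (2 * θ - 1) := by positivity
  have hne : (1:ℝ) - γ ≠ 0 := by linarith
  have hsne : s ≠ 0 := hs_pos.ne'
  have hdne : s + γ * (2 * θ - 1) ≠ 0 := hden.ne'
  rw [hf]
  simp only [Rsym, ← hs]
  rw [eq_comm]
  field_simp
  ring_nf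
  linear_combination hs_sq
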